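/- In Conway's Game of Life, the 8×4-periodic configuration 'marching band', obtained by tiling the plane with the 8×4 pattern R with rows 10000010 / 11001100 / 11001100 / 00101000, has temporal period two: g²(x^R) = x^R but g(x^R) ≠ x^R. -/

import Mathlib

/-- A Game of Life configuration: an assignment of live/dead to each cell of `ℤ²`. -/
abbrev Conf := ℤ × ℤ → Bool

/-- The eight Moore-neighborhood offsets. -/
def nbrOffsets : List (ℤ × ℤ) :=
  [(-1,-1),(-1,0),(-1,1),(0,-1),(0,1),(1,-1),(1,0),(1,1)]

/-- The number of live Moore neighbors of `v` in `x`. -/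
def liveNbrs (x : Conf) (v : ℤ × ℤ) : ℕ :=
  nbrOffsets.countP (fun o => x (v.1 + o.1, v.2 + o.2))

/-- One step of Conway's Game of Life (rule B3/S23). -/
def lifeStep (x : Conf) : Conf := fun v =>
  if x v then decide (liveNbrs x v = 2 ∨ liveNbrs x v = 3)
  else decide (liveNbrs x v = 3)

/-- The marching band agar: the `8 × 4`-periodic configuration tiled by the pattern `R`
with rows (top to bottom) `10000010 / 11001100 / 11001100 / 00101000`;
`x^R_(i,j) = R_(i mod 8, j mod 4)`. -/
def marchingBand : Conf := fun v =>
  let i := v.1 % 8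
  let j := v.2 % 4
  if j = 0 then i == 0 || i == 6
  else if j = 3 then i == 2 || i == 4
  else i == 0 || i == 1 || i == 4 || i == 5

def Per (y : Conf) : Prop :=
  (∀ v : ℤ × ℤ, y (v.1 + 8, v.2) = y v) ∧ (∀ v : ℤ × ℤ, y (v.1, v.2 + 4) = y v)

lemma mb_per : Per marchingBand := by
  constructor <;> intro v <;> simp only [marchingBand]
  · have h : (v.1 + 8) % 8 = v.1 % 8 := by omega
    rw [h]
  · have h : (v.2 + 4) % 4 = v.2 % 4 := by omega
    rw [h]

lemma liveNbrs_per {y : Conf} (h : Per y) (v : ℤ × ℤ) :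
    liveNbrs y (v.1 + 8, v.2) = liveNbrs y v ∧ liveNbrs y (v.1, v.2 + 4) = liveNbrs y v := by
  constructor <;> unfold liveNbrs <;> apply List.countP_congr <;> intro o _ <;> simp only
  · have : v.1 + 8 + o.1 = (v.1 + o.1) + 8 := by ring
    rw [this, h.1 (v.1 + o.1, v.2 + o.2)]
  · have : v.2 + 4 + o.2 = (v.2 + o.2) + 4 := by ring
    rw [this, h.2 (v.1 + o.1, v.2 + o.2)]

lemma lifeStep_per {y : Conf} (h : Per y) : Per (lifeStep y) := by
  constructor <;> intro v <;> simp only [lifeStep]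
  · rw [h.1 v, (liveNbrs_per h v).1]
  · rw [h.2 v, (liveNbrs_per h v).2]

lemma per_shift1 {y : Conf} (h : Per y) (k : ℤ) :
    ∀ a b : ℤ, y (a + 8 * k, b) = y (a, b) := by
  induction k using Int.induction_on with
  | zero => simp
  | succ n ih =>
      intro a b
      have e : a + 8 * ((n : ℤ) + 1) = (a + 8 * n) + 8 := by ring
      rw [e, h.1 (a + 8 * n, b), ih]
  | pred n ih =>
      intro a b
      have h2 := h.1 (a + 8 * (-(n : ℤ) - 1), b)
      have e : a + 8 * (-(n : ℤ) - 1) + 8 = a + 8 * (-(n : ℤ)) := by ring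
      rw [e] at h2
      rw [← h2, ih]

lemma per_shift2 {y : Conf} (h : Per y) (l : ℤ) :
    ∀ a b : ℤ, y (a, b + 4 * l) = y (a, b) := by
  induction l using Int.induction_on with
  | zero => simp
  | succ n ih =>
      intro a b
      have e : b + 4 * ((n : ℤ) + 1) = (b + 4 * n) + 4 := by ring
      rw [e, h.2 (a, b + 4 * n), ih]
  | pred n ih =>
      intro a b
      have h2 := h.2 (a, b + 4 * (-(n : ℤ) - 1))
      have e : b + 4 * (-(n : ℤ) - 1) + 4 = b + 4 * (-(n : ℤ)) := by ring
      rw [e] at h2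
      rw [← h2, ih]

lemma per_reduce {y : Conf} (h : Per y) (i j : ℤ) :
    y (i, j) = y (i % 8, j % 4) := by
  have e1 : i = i % 8 + 8 * (i / 8) := by omega
  have e2 : j = j % 4 + 4 * (j / 4) := by omega
  conv_lhs => rw [e1, e2]
  rw [per_shift1 h, per_shift2 h]

theorem stmt13 : lifeStep (lifeStep marchingBand) = marchingBand ∧
    lifeStep marchingBand ≠ marchingBand := by
  constructor
  · funext v
    obtain ⟨i, j⟩ := v
    rw [per_reduce (lifeStep_per (lifeStep_per mb_per)) i j, per_reduce mb_per i j]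
    have h1 : 0 ≤ i % 8 := by omega
    have h2 : i % 8 < 8 := by omega
    have h3 : 0 ≤ j % 4 := by omega
    have h4 : j % 4 < 4 := by omega
    set a := i % 8
    set b := j % 4
    clear_value a b
    interval_cases a <;> interval_cases b <;> decide
  · intro h
    exact absurd (congrFun h (1, 1)) (by decide)
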